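/- (A closed ideal gas warms up faster than it cools down.) Let λ > 0 and 0 < T₀⁻ < T_q < T₀⁺ be thermodynamically equidistant, i.e., T₀⁺ − T_q · log T₀⁺ = T₀⁻ − T_q · log T₀⁻. Let T^±(t) := T_q + (T₀^± − T_q) e^{−λ t} be the solutions of Newton's Law of Cooling. Then for every t > 0, (T⁺(t) − T⁻(t)) − T_q · log(T⁺(t)/T⁻(t)) > 0; equivalently, the availability (Bregman divergence to equilibrium) of the cooling system strictly exceeds that of the warming system at every positive time: D*(T⁺(t)) > D*(T⁻(t)) where D*(T) := (c+1) N k_B (T − T_q − T_q · log(T/T_q)) for any constants c, N, k_B > 0. -/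

import Mathlib

lemma key_h (Tq a b : ℝ) (ha : 0 < a) (hb : 0 < b) (hbT : b < Tq)
    (heq : a + b = Tq * (Real.log (Tq + a) - Real.log (Tq - b))) :
    ∀ s ∈ Set.Ioo (0:ℝ) 1,
      0 < (a + b) * s - Tq * (Real.log (Tq + a * s) - Real.log (Tq - b * s)) := by
  have hTq : 0 < Tq := hb.trans hbT
  set h : ℝ → ℝ :=
    fun s => (a + b) * s - Tq * (Real.log (Tq + a * s) - Real.log (Tq - b * s)) with hh
  have hP : ∀ σ ∈ Set.Icc (0:ℝ) 1, 0 < Tq + a * σ := by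
    intro σ hσ; nlinarith [hσ.1, hσ.2]
  have hQ : ∀ σ ∈ Set.Icc (0:ℝ) 1, 0 < Tq - b * σ := by
    intro σ hσ; nlinarith [hσ.1, hσ.2]
  have hderiv : ∀ σ ∈ Set.Icc (0:ℝ) 1,
      HasDerivAt h ((a + b) * (σ * ((a - b) * Tq - a * b * σ)) /
        ((Tq + a * σ) * (Tq - b * σ))) σ := by
    intro σ hσ
    have hPσ := hP σ hσ
    have hQσ := hQ σ hσ
    have h1 : HasDerivAt (fun s : ℝ => Tq + a * s) a σ := by
      simpa using ((hasDerivAt_id σ).const_mul a).const_add Tq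
    have h2 : HasDerivAt (fun s : ℝ => Tq - b * s) (-b) σ := by
      simpa using (hasDerivAt_const σ Tq).fun_sub ((hasDerivAt_id σ).const_mul b)
    have hl1 := h1.log (ne_of_gt hPσ)
    have hl2 := h2.log (ne_of_gt hQσ)
    have hmain : HasDerivAt h
        ((a + b) - Tq * (a / (Tq + a * σ) - (-b) / (Tq - b * σ))) σ := by
      have := ((hasDerivAt_id σ).const_mul (a + b)).fun_sub ((hl1.sub hl2).const_mul Tq)
      simpa [hh, mul_comm] using this
    convert hmain using 1
    field_simp
    ring
  have hdiff : ∀ σ ∈ Set.Icc (0:ℝ) 1, DifferentiableAt ℝ h σ :=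
    fun σ hσ => (hderiv σ hσ).differentiableAt
  have hcont : ContinuousOn h (Set.Icc 0 1) :=
    fun σ hσ => (hdiff σ hσ).continuousAt.continuousWithinAt
  have h0 : h 0 = 0 := by simp [hh]
  have h1v : h 1 = 0 := by
    have : h 1 = (a + b) - Tq * (Real.log (Tq + a) - Real.log (Tq - b)) := by
      simp [hh]
    rw [this]; linarith
  intro s hs
  obtain ⟨hs0, hs1⟩ := hs
  rcases le_or_gt 0 ((a - b) * Tq - a * b * s) with hL | hL
  · -- h strictly increasing on [0, s]
    have hsub : Set.Icc (0:ℝ) s ⊆ Set.Icc 0 1 :=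
      Set.Icc_subset_Icc le_rfl hs1.le
    have hmono : StrictMonoOn h (Set.Icc 0 s) := by
      apply strictMonoOn_of_deriv_pos (convex_Icc 0 s) (hcont.mono hsub)
      intro σ hσ
      rw [interior_Icc] at hσ
      have hσI : σ ∈ Set.Icc (0:ℝ) 1 := ⟨hσ.1.le, (hσ.2.trans hs1).le⟩
      rw [(hderiv σ hσI).deriv]
      apply div_pos
      · have hab : 0 < a * b * (s - σ) := by
          have := sub_pos.2 hσ.2
          positivity
        have hpos : (a - b) * Tq - a * b * σ > 0 := by nlinarith
        have := mul_pos hσ.1 hpos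
        positivity
      · exact mul_pos (hP σ hσI) (hQ σ hσI)
    have := hmono (Set.left_mem_Icc.2 hs0.le) (Set.right_mem_Icc.2 hs0.le) hs0
    rw [h0] at this
    simpa [hh] using this
  · -- h strictly decreasing on [s, 1]
    have hsub : Set.Icc s 1 ⊆ Set.Icc (0:ℝ) 1 :=
      Set.Icc_subset_Icc hs0.le le_rfl
    have hanti : StrictAntiOn h (Set.Icc s 1) := by
      apply strictAntiOn_of_deriv_neg (convex_Icc s 1) (hcont.mono hsub)
      intro σ hσ
      rw [interior_Icc] at hσ
      have hσI : σ ∈ Set.Icc (0:ℝ) 1 := ⟨(hs0.trans hσ.1).le, hσ.2.le⟩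
      rw [(hderiv σ hσI).deriv]
      apply div_neg_of_neg_of_pos
      · have hab : 0 < a * b * (σ - s) := by
          have := sub_pos.2 hσ.1
          positivity
        have h1' : (a - b) * Tq - a * b * σ < 0 := by nlinarith
        have h2' : 0 < σ := hs0.trans hσ.1
        exact mul_neg_of_pos_of_neg (by linarith) (mul_neg_of_pos_of_neg h2' h1')
      · exact mul_pos (hP σ hσI) (hQ σ hσI)
    have := hanti (Set.left_mem_Icc.2 hs1.le) (Set.right_mem_Icc.2 hs1.le) hs1
    rw [h1v] at this
    simpa [hh] using this

/-- **A closed ideal gas warms up faster than it cools down.** For thermodynamically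
equidistant initial temperatures `T₀⁻ < T_q < T₀⁺` relaxing by Newton's Law of
Cooling, the availability difference is strictly positive at every positive time:
the cooling system is always strictly farther from equilibrium than the warming
system, as measured by the Bregman divergence
`D*(T) = (c+1) N k_B (T − T_q − T_q log(T/T_q))`. -/
theorem ideal_gas_warms_up_faster
    (lam Tq T0m T0p : ℝ) (hlam : 0 < lam)
    (hT0m : 0 < T0m) (hTm : T0m < Tq) (hTp : Tq < T0p)
    (heq : T0p - Tq * Real.log T0p = T0m - Tq * Real.log T0m)
    (Tp Tm : ℝ → ℝ)
    (hTpdef : ∀ t, Tp t = Tq + (T0p - Tq) * Real.exp (-lam * t))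
    (hTmdef : ∀ t, Tm t = Tq + (T0m - Tq) * Real.exp (-lam * t))
    (D : ℝ → ℝ) (c N kB : ℝ) (hc : 0 < c) (hN : 0 < N) (hkB : 0 < kB)
    (hD : ∀ T, D T = (c + 1) * N * kB * (T - Tq - Tq * Real.log (T / Tq))) :
    ∀ t > (0:ℝ),
      0 < (Tp t - Tm t) - Tq * Real.log (Tp t / Tm t) ∧
      D (Tm t) < D (Tp t) := by
  have hTq : 0 < Tq := hT0m.trans hTm
  set a := T0p - Tq with ha_def
  set b := Tq - T0m with hb_def
  have ha : 0 < a := by simp [ha_def]; linarith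
  have hb : 0 < b := by simp [hb_def]; linarith
  have hbT : b < Tq := by simp [hb_def]; linarith
  have heq' : a + b = Tq * (Real.log (Tq + a) - Real.log (Tq - b)) := by
    have h1 : Tq + a = T0p := by simp [ha_def]
    have h2 : Tq - b = T0m := by rw [hb_def]; ring
    rw [h1, h2, mul_sub]
    simp only [ha_def, hb_def]
    linarith
  intro t ht
  set s := Real.exp (-lam * t) with hs_def
  have hs0 : 0 < s := Real.exp_pos _
  have hs1 : s < 1 := by
    rw [hs_def]
    apply Real.exp_lt_one_iff.mpr
    nlinarith
  have hkey := key_h Tq a b ha hb hbT heq' s ⟨hs0, hs1⟩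
  have hTpt : Tp t = Tq + a * s := by rw [hTpdef t]
  have hTmt : Tm t = Tq - b * s := by rw [hTmdef t, hb_def, hs_def]; ring
  have hTpt_pos : 0 < Tp t := by rw [hTpt]; positivity
  have hTmt_pos : 0 < Tm t := by rw [hTmt]; nlinarith
  have hlog : Real.log (Tp t / Tm t) = Real.log (Tp t) - Real.log (Tm t) :=
    Real.log_div (ne_of_gt hTpt_pos) (ne_of_gt hTmt_pos)
  have hmain : 0 < (Tp t - Tm t) - Tq * (Real.log (Tp t) - Real.log (Tm t)) := by
    rw [hTpt, hTmt]
    have : (Tq + a * s) - (Tq - b * s) = (a + b) * s := by ring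
    rw [this]
    exact hkey
  constructor
  · rw [hlog]; exact hmain
  · rw [hD (Tm t), hD (Tp t)]
    have hK : 0 < (c + 1) * N * kB := by positivity
    have hlp : Real.log (Tp t / Tq) = Real.log (Tp t) - Real.log Tq :=
      Real.log_div (ne_of_gt hTpt_pos) (ne_of_gt hTq)
    have hlm : Real.log (Tm t / Tq) = Real.log (Tm t) - Real.log Tq :=
      Real.log_div (ne_of_gt hTmt_pos) (ne_of_gt hTq)
    rw [hlp, hlm]
    nlinarith
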